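/- Combining the three propagation identities, under the unit-block model with ReLU the gradient variance ratio satisfies Var[∂L/∂x^l] / Var[∂L/∂x^{l+1}] = (n_out/n_in)·(1 + 4/n_g), where n_g = n_out/G; in particular this ratio equals 1 precisely when G = (n_in − n_out)/4. -/

import Mathlib

/-- Combining the three propagation identities of the unit block (linear layer,
group normalization with group size `n_g = n_out/G`, ReLU): the gradient variance
ratio satisfies `Var[∂L/∂x^l]/Var[∂L/∂x^{l+1}] = (n_out/n_in)(1 + 4/n_g)`, and
this ratio equals `1` precisely when `G = (n_in − n_out)/4`. -/
theorem unit_block_gradient_variance_ratio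
    (n_in n_out G : ℕ) (hin : 0 < n_in) (hout : 0 < n_out) (hG : 0 < G)
    (VW σ2 n_g VarX VarY VarZ VarX' : ℝ) (hVW : 0 < VW) (hVarX' : 0 < VarX')
    (hng : n_g = (n_out : ℝ) / G)
    (hσ2 : σ2 = (n_in : ℝ) * (1 / 2) * VW)
    (hX : VarX = (n_out : ℝ) * VW * VarY)
    (hY : VarY = (1 / σ2) * (1 + 4 / n_g) * VarZ)
    (hZ : VarZ = (1 / 2) * VarX') :
    VarX / VarX' = ((n_out : ℝ) / n_in) * (1 + 4 / n_g) ∧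
    (VarX / VarX' = 1 ↔ (G : ℝ) = ((n_in : ℝ) - n_out) / 4) := by
  have hinR : (0:ℝ) < (n_in : ℝ) := by exact_mod_cast hin
  have houtR : (0:ℝ) < (n_out : ℝ) := by exact_mod_cast hout
  have hGR : (0:ℝ) < (G : ℝ) := by exact_mod_cast hG
  have hratio : VarX / VarX' = ((n_out : ℝ) / n_in) * (1 + 4 / n_g) := by
    subst hX hY hZ hσ2
    field_simp
  refine ⟨hratio, ?_⟩
  rw [hratio, hng]
  rw [div_div_eq_mul_div]
  constructor
  · intro h
    field_simp at h
    have h3 : (n_out:ℝ) + 4 * G = n_in := mul_left_cancel₀ houtR.ne' (by rw [h])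
    linarith
  · intro h
    have h3 : 4 * (G:ℝ) = (n_in:ℝ) - n_out := by rw [h]; ring
    field_simp
    linear_combination h3
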